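/- Let δ > 0, let n be a natural number, let θ : Fin n → ℝ be a list of angles, and let λ be a nonzero complex number such that for every k, (λδ/2)·exp(i θ_k) ≠ 1 and conj(λδ/2) ≠ exp(i θ_k). Then conj( Π_{k} (1 + (λδ/2)·exp(i θ_k)) / (1 − (λδ/2)·exp(i θ_k)) ) = (−1)^n · Π_{k} (1 + (2/(δ·conj λ))·exp(i θ_k)) / (1 − (2/(δ·conj λ))·exp(i θ_k)). In other words, the duality f ↦ f† = ε·conj(f), where ε = (−1)^n is the biconstant, maps the discrete exponential with parameter λ to the discrete exponential with parameter 4/(δ²·conj λ): exp(:λ:)† = exp(:4/(δ² conj λ):). -/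

import Mathlib

open Complex

theorem discrete_exponential_duality
    (δ : ℝ) (hδ : 0 < δ) (n : ℕ) (θ : Fin n → ℝ)
    (lam : ℂ) (hlam : lam ≠ 0)
    (h1 : ∀ k : Fin n, (lam * δ / 2) * Complex.exp (Complex.I * θ k) ≠ 1)
    (h2 : ∀ k : Fin n, (starRingEnd ℂ) (lam * δ / 2) ≠ Complex.exp (Complex.I * θ k)) :
    (starRingEnd ℂ) (∏ k : Fin n,
        (1 + (lam * δ / 2) * Complex.exp (Complex.I * θ k)) /
        (1 - (lam * δ / 2) * Complex.exp (Complex.I * θ k))) =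
      (-1 : ℂ) ^ n * ∏ k : Fin n,
        (1 + (2 / (δ * (starRingEnd ℂ) lam)) * Complex.exp (Complex.I * θ k)) /
        (1 - (2 / (δ * (starRingEnd ℂ) lam)) * Complex.exp (Complex.I * θ k)) := by
  rw [map_prod]
  have key : ∀ k : Fin n,
      (starRingEnd ℂ) ((1 + (lam * δ / 2) * Complex.exp (Complex.I * θ k)) /
        (1 - (lam * δ / 2) * Complex.exp (Complex.I * θ k))) =
      (-1 : ℂ) * ((1 + (2 / (δ * (starRingEnd ℂ) lam)) * Complex.exp (Complex.I * θ k)) /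
        (1 - (2 / (δ * (starRingEnd ℂ) lam)) * Complex.exp (Complex.I * θ k))) := by
    intro k
    have hδ0 : (δ : ℂ) ≠ 0 := by exact_mod_cast hδ.ne'
    have hcl : (starRingEnd ℂ) lam ≠ 0 := by simpa using hlam
    have he : Complex.exp (Complex.I * θ k) ≠ 0 := Complex.exp_ne_zero _
    have hce : (starRingEnd ℂ) (Complex.exp (Complex.I * θ k)) =
        (Complex.exp (Complex.I * θ k))⁻¹ := by
      rw [← Complex.exp_conj, ← Complex.exp_neg]
      congr 1
      simp [Complex.conj_ofReal]
    have hne : Complex.exp (Complex.I * θ k) - (starRingEnd ℂ) lam * δ / 2 ≠ 0 := by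
      intro h
      apply h2 k
      rw [map_div₀, map_mul]
      simp only [Complex.conj_ofReal, map_ofNat]
      linear_combination -h
    have hne2 : (1 : ℂ) - lam * δ / 2 * Complex.exp (Complex.I * θ k) ≠ 0 := by
      intro h
      apply h1 k
      linear_combination -h
    simp only [map_div₀, map_add, map_sub, map_one, map_mul, Complex.conj_ofReal, map_ofNat, hce]
    have hd1 : (1 : ℂ) - (starRingEnd ℂ) lam * δ / 2 * (Complex.exp (Complex.I * θ k))⁻¹ ≠ 0 := by
      intro h
      apply hne
      field_simp at h
      linear_combination h / 2
    have hd2 : (1 : ℂ) - 2 / (↑δ * (starRingEnd ℂ) lam) * Complex.exp (Complex.I * θ k) ≠ 0 := by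
      intro h
      apply hne
      field_simp at h
      linear_combination -h / 2
    have hD : 2 * Complex.exp (Complex.I * θ k) - (starRingEnd ℂ) lam * ↑δ ≠ 0 := fun h =>
      hne (by linear_combination h / 2)
    have hD' : ↑δ * (starRingEnd ℂ) lam - 2 * Complex.exp (Complex.I * θ k) ≠ 0 := fun h =>
      hne (by linear_combination -h / 2)
    field_simp
    have hD'' : -(Complex.exp (Complex.I * θ k) * 2) + (starRingEnd ℂ) lam * ↑δ ≠ 0 := fun h =>
      hne (by linear_combination -h / 2)
    have hX := mul_inv_cancel₀ hD''
    linear_combination -(Complex.exp (Complex.I * θ k) * 2 + (starRingEnd ℂ) lam * ↑δ) * hX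
  calc ∏ k : Fin n, (starRingEnd ℂ) ((1 + (lam * δ / 2) * Complex.exp (Complex.I * θ k)) /
        (1 - (lam * δ / 2) * Complex.exp (Complex.I * θ k)))
      = ∏ k : Fin n, (-1 : ℂ) * ((1 + (2 / (δ * (starRingEnd ℂ) lam)) * Complex.exp (Complex.I * θ k)) /
        (1 - (2 / (δ * (starRingEnd ℂ) lam)) * Complex.exp (Complex.I * θ k))) :=
        Finset.prod_congr rfl fun k _ => key k
    _ = _ := by rw [Finset.prod_mul_distrib, Finset.prod_const]; simp
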